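/- Let α, β ∈ (0,1], let k > 0 be a real number with k − β > 0 and k − β − α + 1 > 0, and let t > 0. Applying the GFD of order β with parameter k to f(x) = x^k gives g(x) = (Γ(k+1)/Γ(k−β+1))·x^(k−β); then applying the GFD of order α with parameter k − β to g gives (Γ(k−β)/Γ(k−β−α+1))·t^(1−α)·g′(t) = (Γ(k+1)/Γ(k−β−α+1))·t^(k−β−α), which equals the GFD of order α+β of x^k at t, namely (Γ(k)/Γ(k−α−β+1))·t^(1−α−β)·(k·t^(k−1)) = (Γ(k+1)/Γ(k−β−α+1))·t^(k−β−α). Hence D^α D^β t^k = D^(α+β) t^k. -/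

import Mathlib

open Real

/-- Semigroup property of the GFD on power functions: applying the GFD of order `β`
(with parameter `k`) to `x ↦ x^k` gives `g x = (Γ(k+1)/Γ(k-β+1))·x^(k-β)`; applying the
GFD of order `α` (with parameter `k-β`) to `g` at `t` gives
`(Γ(k-β)/Γ(k-β-α+1))·t^(1-α)·g'(t) = (Γ(k+1)/Γ(k-β-α+1))·t^(k-β-α)`, which equals the
GFD of order `α+β` of `x^k` at `t`, namely `(Γ(k)/Γ(k-α-β+1))·t^(1-α-β)·(k·t^(k-1))`.
Hence `D^α D^β t^k = D^(α+β) t^k`. -/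
theorem gfd_semigroup_rpow (α β k t : ℝ) (hα : 0 < α) (hα1 : α ≤ 1)
    (hβ : 0 < β) (hβ1 : β ≤ 1) (hk : 0 < k) (hkβ : k - β > 0)
    (hkβα : k - β - α + 1 > 0) (ht : 0 < t) :
    Real.Gamma (k - β) / Real.Gamma (k - β - α + 1) * t ^ (1 - α) *
        deriv (fun x : ℝ => Real.Gamma (k + 1) / Real.Gamma (k - β + 1) * x ^ (k - β)) t
      = Real.Gamma (k + 1) / Real.Gamma (k - β - α + 1) * t ^ (k - β - α) ∧
    Real.Gamma k / Real.Gamma (k - α - β + 1) * t ^ (1 - α - β) * (k * t ^ (k - 1))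
      = Real.Gamma (k + 1) / Real.Gamma (k - β - α + 1) * t ^ (k - β - α) := by
  have hG1 : Real.Gamma (k - β + 1) = (k - β) * Real.Gamma (k - β) :=
    Real.Gamma_add_one (ne_of_gt hkβ)
  have hG2 : Real.Gamma (k + 1) = k * Real.Gamma k :=
    Real.Gamma_add_one (ne_of_gt hk)
  have hGkβ : Real.Gamma (k - β) ≠ 0 := (Real.Gamma_pos_of_pos (by linarith)).ne'
  have hGd : Real.Gamma (k - β - α + 1) ≠ 0 := (Real.Gamma_pos_of_pos (by linarith)).ne'
  have hd : deriv (fun x : ℝ => Real.Gamma (k + 1) / Real.Gamma (k - β + 1) * x ^ (k - β)) t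
      = Real.Gamma (k + 1) / Real.Gamma (k - β + 1) * ((k - β) * t ^ (k - β - 1)) := by
    rw [deriv_const_mul _ (Real.differentiableAt_rpow_const_of_ne _ ht.ne'),
      Real.deriv_rpow_const t (k - β)]
  constructor
  · rw [hd, hG1]
    have h1 : t ^ (1 - α) * t ^ (k - β - 1) = t ^ (k - β - α) := by
      rw [← Real.rpow_add ht]; ring_nf
    have hkβne : (k - β) ≠ 0 := ne_of_gt hkβ
    field_simp
    rw [← h1]
  · rw [hG2]
    have heq : k - α - β + 1 = k - β - α + 1 := by ring
    rw [heq]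
    have h1 : t ^ (1 - α - β) * t ^ (k - 1) = t ^ (k - β - α) := by
      rw [← Real.rpow_add ht]; ring_nf
    rw [← h1]; ring
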